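/- Let n ≥ 2. Let p be the uniform probability distribution on the n constant functions Fin n → Fin n, and let q be the uniform probability distribution on the bijections of Fin n (assigning 1/n! to each bijective function and 0 to all other functions). Then for all x, y ∈ Fin n, P_p(x, y) = P_q(x, y) = 1/n, but for all x ≠ x' and all y, P_p(x, x', y, y) = 1/n while P_q(x, x', y, y) = 0. In particular, distinct distributions on functions can induce identical one-way counterfactuals while differing on two-way joint counterfactuals. -/

import Mathlib

open Finset Function

/-- `p` is a probability distribution on functions `A → B`. -/
def IsProbDist {A B : Type*} [Fintype A] [DecidableEq A] [Fintype B]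
    (p : (A → B) → ℝ) : Prop :=
  (∀ f, 0 ≤ p f) ∧ (∑ f, p f) = 1

/-- One-way counterfactual `P_p(x, y) = ∑_{f : f x = y} p f`. -/
def oneWay {A B : Type*} [Fintype A] [DecidableEq A] [Fintype B] [DecidableEq B]
    (p : (A → B) → ℝ) (x : A) (y : B) : ℝ :=
  ∑ f, if f x = y then p f else 0

/-- Two-way joint counterfactual `P_p(x, x', y, y') = ∑_{f : f x = y, f x' = y'} p f`. -/
def twoWay {A B : Type*} [Fintype A] [DecidableEq A] [Fintype B] [DecidableEq B]
    (p : (A → B) → ℝ) (x x' : A) (y y' : B) : ℝ :=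
  ∑ f, if f x = y ∧ f x' = y' then p f else 0

/-- Uniform distribution on the `n` constant functions `Fin n → Fin n`. -/
noncomputable def unifConst (n : ℕ) : (Fin n → Fin n) → ℝ :=
  fun f => if ∃ c, f = fun _ => c then 1 / (n : ℝ) else 0

/-- Uniform distribution on the `n!` bijections of `Fin n`. -/
noncomputable def unifBij (n : ℕ) : (Fin n → Fin n) → ℝ :=
  fun f => if Function.Bijective f then 1 / (Nat.factorial n : ℝ) else 0

noncomputable def bijEquivPerm (n : ℕ) : {f : Fin n → Fin n // Bijective f} ≃ Equiv.Perm (Fin n) where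
  toFun f := Equiv.ofBijective f.1 f.2
  invFun σ := ⟨σ, σ.bijective⟩
  left_inv f := rfl
  right_inv σ := by ext x; rfl

lemma total_unifBij (n : ℕ) : ∑ f, unifBij n f = 1 := by
  unfold unifBij
  rw [Finset.sum_ite, Finset.sum_const_zero, Finset.sum_const, add_zero]
  rw [Finset.filter_congr_decidable]
  have : (Finset.univ.filter (fun f : Fin n → Fin n => Bijective f)).card
      = Nat.factorial n := by
    rw [← Fintype.card_subtype]
    rw [Fintype.card_congr (bijEquivPerm n), Fintype.card_perm, Fintype.card_fin]
  rw [this]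
  have h : (Nat.factorial n : ℝ) ≠ 0 := Nat.cast_ne_zero.mpr (Nat.factorial_ne_zero n)
  rw [nsmul_eq_mul]; field_simp

lemma oneWay_bij_symm (n : ℕ) (x y y' : Fin n) :
    oneWay (unifBij n) x y = oneWay (unifBij n) x y' := by
  unfold oneWay
  refine Fintype.sum_equiv (Equiv.piCongrRight (fun _ : Fin n => Equiv.swap y y')) _ _ ?_
  intro f
  simp only [Equiv.piCongrRight_apply, Pi.map_apply]
  have h1 : Equiv.swap y y' (f x) = y' ↔ f x = y := by
    constructor
    · intro h
      have := (Equiv.swap y y').injective (a₁ := f x) (a₂ := y)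
      apply this
      rw [h, Equiv.swap_apply_left]
    · intro h; rw [h, Equiv.swap_apply_left]
  have h2 : unifBij n (fun i => Equiv.swap y y' (f i)) = unifBij n f := by
    unfold unifBij
    congr 1
    simp only [eq_iff_iff]
    constructor
    · intro h
      have : f = (Equiv.swap y y').symm ∘ (fun i => Equiv.swap y y' (f i)) := by
        ext i; simp
      rw [this]
      exact (Equiv.swap y y').symm.bijective.comp h
    · intro h
      exact (Equiv.swap y y').bijective.comp h
  show (if f x = y then unifBij n f else 0)
      = if Equiv.swap y y' (f x) = y' then unifBij n (fun i => Equiv.swap y y' (f i)) else 0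
  rw [h2]
  exact if_congr h1.symm rfl rfl

lemma oneWay_bij (n : ℕ) (hn : 1 ≤ n) (x y : Fin n) :
    oneWay (unifBij n) x y = 1 / (n : ℝ) := by
  have hsum : ∑ y' : Fin n, oneWay (unifBij n) x y' = 1 := by
    unfold oneWay
    rw [Finset.sum_comm]
    rw [← total_unifBij n]
    refine Finset.sum_congr rfl fun f _ => ?_
    simp
  have hconst : ∑ y' : Fin n, oneWay (unifBij n) x y'
      = (n : ℝ) * oneWay (unifBij n) x y := by
    rw [Finset.sum_congr rfl fun y' _ => oneWay_bij_symm n x y' y]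
    rw [Finset.sum_const, Finset.card_univ, Fintype.card_fin, nsmul_eq_mul]
  have hn0 : (n : ℝ) ≠ 0 := by positivity
  rw [hconst] at hsum
  field_simp
  linarith

theorem constants_vs_bijections (n : ℕ) (hn : 2 ≤ n) :
    unifConst n ≠ unifBij n ∧
    (∀ x y : Fin n, oneWay (unifConst n) x y = 1 / (n : ℝ) ∧
      oneWay (unifBij n) x y = 1 / (n : ℝ)) ∧
    (∀ x x' : Fin n, x ≠ x' → ∀ y : Fin n,
      twoWay (unifConst n) x x' y y = 1 / (n : ℝ) ∧
      twoWay (unifBij n) x x' y y = 0) := by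
  have hn0 : (n : ℝ) ≠ 0 := by positivity
  have hconstOne : ∀ x y : Fin n, oneWay (unifConst n) x y = 1 / (n : ℝ) := by
    intro x y
    unfold oneWay
    have : ∀ f : Fin n → Fin n,
        (if f x = y then unifConst n f else 0)
        = if f = (fun _ => y) then 1 / (n : ℝ) else 0 := by
      intro f
      unfold unifConst
      split_ifs with h1 h2 h3 h3 h3
      · rfl
      · obtain ⟨c, rfl⟩ := h2
        exact absurd (by rw [← h1]) h3
      · exact absurd ⟨y, h3⟩ h2
      · rfl
      · exact absurd (by rw [h3]) h1
      · rfl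
    rw [Finset.sum_congr rfl fun f _ => this f, Finset.sum_ite_eq' Finset.univ]
    simp
  refine ⟨?_, fun x y => ⟨hconstOne x y, oneWay_bij n (le_trans one_le_two hn) x y⟩,
    fun x x' hxx' y => ⟨?_, ?_⟩⟩
  · intro h
    have h1 : unifConst n id = 0 := by
      unfold unifConst
      rw [if_neg]
      rintro ⟨c, hc⟩
      have h0 := congrFun hc (⟨0, by omega⟩ : Fin n)
      have h1 := congrFun hc (⟨1, by omega⟩ : Fin n)
      simp only [id] at h0 h1
      have := congrArg Fin.val (h0.trans h1.symm)
      simp at this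
    have h2 : unifBij n id = 1 / (Nat.factorial n : ℝ) := by
      unfold unifBij
      rw [if_pos Function.bijective_id]
    rw [h] at h1
    rw [h1] at h2
    have : (Nat.factorial n : ℝ) ≠ 0 := Nat.cast_ne_zero.mpr (Nat.factorial_ne_zero n)
    field_simp at h2
    simp at h2
  · unfold twoWay
    have : ∀ f : Fin n → Fin n,
        (if f x = y ∧ f x' = y then unifConst n f else 0)
        = if f = (fun _ => y) then 1 / (n : ℝ) else 0 := by
      intro f
      unfold unifConst
      split_ifs with h1 h2 h3 h3 h3
      · rfl
      · obtain ⟨c, rfl⟩ := h2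
        exact absurd (by rw [← h1.1]) h3
      · exact absurd ⟨y, h3⟩ h2
      · rfl
      · exact absurd ⟨by rw [h3], by rw [h3]⟩ h1
      · rfl
    rw [Finset.sum_congr rfl fun f _ => this f, Finset.sum_ite_eq' Finset.univ]
    simp
  · unfold twoWay
    refine Finset.sum_eq_zero fun f _ => ?_
    rw [ite_eq_right_iff]
    rintro ⟨h1, h2⟩
    unfold unifBij
    rw [if_neg]
    intro hbij
    exact hxx' (hbij.injective (h1.trans h2.symm))
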